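/- Let p = (p₁,…,pₘ) : ℝ^d → ℝ^m be a polynomial map with p(0) = 0, and let X : [0,T] → ℝ^d be a path with X₀ = 0 and p(X_t) = 0 for all t ∈ [0,T]. Let I be the smallest subspace of T^{≥1}(ℝ^d) containing φ(p₁),…,φ(pₘ) and satisfying x≻y ∈ I and y≻x ∈ I for all x ∈ I, y ∈ T^{≥1}(ℝ^d) (the ≻-ideal generated by the φ(pᵢ)). Then ⟨σ(X), x⟩ = 0 for every x ∈ I, i.e. X ∈ 𝒱(I). -/

import Mathlib

open scoped BigOperators TensorProduct

namespace PathVarieties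

/-- Words over an alphabet `α`; the letters `{1,…,d}` of `ℝ^d` correspond to `α = Fin d`. -/
abbrev Word (α : Type*) := List α

/-- The tensor algebra `T(ℝ^d)`, identified with the free real vector space on words. -/
abbrev TA (α : Type*) := Word α →₀ ℝ

/-- The list of all (riffle) shuffles of two words. -/
def shuffles {α : Type*} : Word α → Word α → List (Word α)
  | [], v => [v]
  | a :: u, [] => [a :: u]
  | a :: u, b :: v =>
      ((shuffles u (b :: v)).map (a :: ·)) ++ ((shuffles (a :: u) v).map (b :: ·))
termination_by u v => u.length + v.length
decreasing_by all_goals (simp only [List.length_cons]; omega)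

/-- Shuffle product of two words, as an element of `T(ℝ^d)`. -/
noncomputable def shw {α : Type*} (u v : Word α) : TA α :=
  ((shuffles u v).map fun w => Finsupp.single w (1 : ℝ)).sum

/-- The shuffle product `⧢` on `T(ℝ^d)`, the bilinear extension of the shuffle of words. -/
noncomputable def sh {α : Type*} (x y : TA α) : TA α :=
  x.sum fun u cu => y.sum fun v cv => (cu * cv) • shw u v

/-- Right halfshuffle `u ≻ v` of words (`v` nonempty): shuffle `u` with `v` minus its
last letter, then append the last letter of `v`.  (This is the unique bilinear operation
with `w ≻ a = wa` and `w ≻ (va) = (w≻v + v≻w)a`.) -/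
noncomputable def rshw {α : Type*} (u v : Word α) : TA α :=
  ((shuffles u v.dropLast).map fun w =>
    Finsupp.single (w ++ v.drop (v.length - 1)) (1 : ℝ)).sum

/-- Right halfshuffle `≻` on `T^{≥1}(ℝ^d)`, extended bilinearly. -/
noncomputable def rsh {α : Type*} (x y : TA α) : TA α :=
  x.sum fun u cu => y.sum fun v cv => (cu * cv) • rshw u v

/-- Left halfshuffle `u ≺ v` of words (`u` nonempty): the first letter of `u` followed by
the shuffle of the rest of `u` with `v`.  (This is the unique bilinear operation with
`a ≺ w = aw` and `(av) ≺ w = a(w≺v + v≺w)`.) -/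
noncomputable def lshw {α : Type*} (u v : Word α) : TA α :=
  ((shuffles u.tail v).map fun w => Finsupp.single (u.take 1 ++ w) (1 : ℝ)).sum

/-- Left halfshuffle `≺` on `T^{≥1}(ℝ^d)`, extended bilinearly. -/
noncomputable def lsh {α : Type*} (x y : TA α) : TA α :=
  x.sum fun u cu => y.sum fun v cv => (cu * cv) • lshw u v

/-- The antipode `𝒜`, with `𝒜(i₁⋯iₙ) = (−1)ⁿ iₙ⋯i₁`. -/
noncomputable def antipode {α : Type*} (x : TA α) : TA α :=
  x.sum fun w c => Finsupp.single w.reverse (((-1 : ℝ) ^ w.length) * c)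

/-- Helper for `Λ_B`: value on a reversed word. -/
noncomputable def lamRev {α β : Type*} (B : α → TA β) : Word α → TA β
  | [] => Finsupp.single [] 1
  | [i] => B i
  | i :: w => rsh (lamRev B w) (B i)

/-- `Λ_B` on a word: `Λ_B e = e`, `Λ_B i = B i`, `Λ_B (w·i) = (Λ_B w) ≻ (Λ_B i)`. -/
noncomputable def lamW {α β : Type*} (B : α → TA β) (w : Word α) : TA β :=
  lamRev B w.reverse

/-- The linear map `Λ_B : T(ℝ^t) → T(ℝ^d)` induced by `B` on letters. -/
noncomputable def Lam {α β : Type*} (B : α → TA β) (x : TA α) : TA β :=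
  x.sum fun w c => c • lamW B w

/-- `splitEmb e j n w = Σ_{w = u₁⋯uₙ} e_j(u₁) ⧢ e_{j+1}(u₂) ⧢ ⋯ ⧢ e_{j+n−1}(uₙ)`,
the sum over all splittings of `w` into `n` consecutive (possibly empty) factors,
each factor relabelled letterwise by `e`. -/
noncomputable def splitEmb {α β : Type*} (e : ℕ → α → β) : ℕ → ℕ → Word α → TA β
  | _, 0, w => if w.isEmpty then Finsupp.single ([] : Word β) (1 : ℝ) else 0
  | j, k + 1, w => ∑ m ∈ Finset.range (w.length + 1),
      sh (Finsupp.single ((w.take m).map (e j)) (1 : ℝ)) (splitEmb e (j + 1) k (w.drop m))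

/-- `Σ_{x=uv} f(u)·v`: deconcatenate, evaluate the functional `f` on prefixes. -/
noncomputable def leftAct {α : Type*} (f : Word α → ℝ) (x : TA α) : TA α :=
  x.sum fun w c => c • ∑ k ∈ Finset.range (w.length + 1),
    f (w.take k) • Finsupp.single (w.drop k) (1 : ℝ)

/-- `Σ_{x=uv} u·f(v)`: deconcatenate, evaluate the functional `f` on suffixes. -/
noncomputable def rightAct {α : Type*} (f : Word α → ℝ) (x : TA α) : TA α :=
  x.sum fun w c => c • ∑ k ∈ Finset.range (w.length + 1),
    f (w.drop k) • Finsupp.single (w.take k) (1 : ℝ)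

/-- A raw path: a time horizon `T` together with a map `ℝ → ℝ^α`
(only the restriction to `[0,T]` is relevant). -/
structure RawPath (α : Type*) where
  T : ℝ
  toFun : ℝ → α → ℝ

/-- A path: positive time horizon, continuous on `[0,T]` and piecewise continuously
differentiable there (witnessed by a partition `0 = τ₀ < τ₁ < ⋯ < τₙ = T`). -/
def IsPath {α : Type*} (X : RawPath α) : Prop :=
  0 < X.T ∧ (∀ i, ContinuousOn (fun t => X.toFun t i) (Set.Icc 0 X.T)) ∧
    ∃ (n : ℕ) (τ : Fin (n + 1) → ℝ), StrictMono τ ∧ τ 0 = 0 ∧ τ (Fin.last n) = X.T ∧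
      ∀ (k : Fin n) (i : α), ContDiffOn ℝ 1 (fun t => X.toFun t i)
        (Set.Icc (τ k.castSucc) (τ k.succ))

/-- Iterated integrals, by recursion on the reversed word:
`sigRev X (i :: w) t = ∫₀ᵗ ⟨σ(X)ₛ, w.reverse⟩ dX⁽ⁱ⁾(s)`. -/
noncomputable def sigRev {α : Type*} (X : ℝ → α → ℝ) : Word α → ℝ → ℝ
  | [], _ => 1
  | i :: w, t => ∫ s in (0 : ℝ)..t, sigRev X w s * deriv (fun u => X u i) s

/-- `⟨σ(X)_t, w⟩`, the iterated-integrals signature of `X` stopped at time `t`. -/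
noncomputable def sigUpTo {α : Type*} (X : RawPath α) (t : ℝ) (w : Word α) : ℝ :=
  sigRev X.toFun w.reverse t

/-- `⟨σ(X), w⟩`, the iterated-integrals signature of the path `X` at a word `w`. -/
noncomputable def sig {α : Type*} (X : RawPath α) (w : Word α) : ℝ :=
  sigUpTo X X.T w

/-- Pairing of a word-indexed functional with an element of `T(ℝ^d)`. -/
noncomputable def pairF {α : Type*} (f : Word α → ℝ) (x : TA α) : ℝ :=
  x.sum fun w c => c * f w

/-- `⟨σ(X), x⟩` for a tensor `x ∈ T(ℝ^d)` (linear in `x`). -/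
noncomputable def pair {α : Type*} (X : RawPath α) (x : TA α) : ℝ :=
  Finsupp.linearCombination ℝ (sig X) x

/-- The path variety `𝒱(W)` of all paths whose signature kills every element of `W`. -/
def V {α : Type*} (W : Set (TA α)) : Set (RawPath α) :=
  {X | IsPath X ∧ ∀ x ∈ W, pair X x = 0}

/-- `ℐ(M)`, the space of tensors killed by the signature of every path in `M`. -/
noncomputable def Idl {α : Type*} (M : Set (RawPath α)) : Submodule ℝ (TA α) :=
  ⨅ X ∈ M, LinearMap.ker (Finsupp.linearCombination ℝ (sig X))

/-- Concatenation `X ⊔ Y` of paths. -/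
noncomputable def concat {α : Type*} (X Y : RawPath α) : RawPath α where
  T := X.T + Y.T
  toFun := fun t i =>
    if t ≤ X.T then X.toFun t i else Y.toFun (t - X.T) i + X.toFun X.T i - Y.toFun 0 i

/-- Time reversal `⟵X`. -/
def timeRev {α : Type*} (X : RawPath α) : RawPath α :=
  ⟨X.T, fun t i => X.toFun (X.T - t) i⟩

/-- `concatIter X n = X^{⊔(n+1)}`. -/
noncomputable def concatIter {α : Type*} (X : RawPath α) : ℕ → RawPath α
  | 0 => X
  | n + 1 => concat (concatIter X n) X

/-- `X^{⊔n}`, the `n`-fold concatenation of `X` with itself (intended for `n ≥ 1`). -/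
noncomputable def concatPow {α : Type*} (X : RawPath α) (n : ℕ) : RawPath α :=
  concatIter X (n - 1)

/-- `concatFold f k = f 0 ⊔ f 1 ⊔ ⋯ ⊔ f k`. -/
noncomputable def concatFold {α : Type*} (f : ℕ → RawPath α) : ℕ → RawPath α
  | 0 => f 0
  | k + 1 => concat (concatFold f k) (f (k + 1))

/-- The deconcatenation coproduct `Δ : T(ℝ^d) → T(ℝ^d) ⊗ T(ℝ^d)`,
`Δw = Σ_{w=uv} u ⊗ v`. -/
noncomputable def deconc {α : Type*} (x : TA α) : TensorProduct ℝ (TA α) (TA α) :=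
  x.sum fun w c => c • ∑ k ∈ Finset.range (w.length + 1),
    (Finsupp.single (w.take k) (1 : ℝ)) ⊗ₜ[ℝ] (Finsupp.single (w.drop k) (1 : ℝ))



section Aux

open Set MeasureTheory intervalIntegral Topology Filter
open scoped Classical

theorem shuffles_nil_left {α : Type*} (v : Word α) : shuffles [] v = [v] := by
  cases v <;> simp [shuffles]

theorem shuffles_nil_right {α : Type*} (u : Word α) : shuffles u [] = [u] := by
  cases u <;> simp [shuffles]

theorem shuffles_cons_cons {α : Type*} (a b : α) (u v : Word α) :
    shuffles (a :: u) (b :: v) =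
      ((shuffles u (b :: v)).map (a :: ·)) ++ ((shuffles (a :: u) v).map (b :: ·)) := by
  rw [shuffles]

theorem length_mem_shuffles {α : Type*} :
    ∀ (n : ℕ) (u v w : Word α), u.length + v.length = n → w ∈ shuffles u v →
      w.length = u.length + v.length := by
  intro n
  induction n using Nat.strong_induction_on with
  | _ n ih =>
    intro u v w hn hw
    match u, v with
    | [], v => simp_all [shuffles_nil_left]
    | a :: u, [] => simp_all [shuffles_nil_right]
    | a :: u, b :: v =>
      rw [shuffles_cons_cons] at hw
      rcases List.mem_append.1 hw with h | h <;> rcases List.mem_map.1 h with ⟨w', hw', rfl⟩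
      · have := ih (u.length + (b :: v).length) (by simp at hn ⊢; omega) u (b :: v) w' rfl hw'
        simp at this ⊢; omega
      · have := ih ((a :: u).length + v.length) (by simp at hn ⊢; omega) (a :: u) v w' rfl hw'
        simp at this ⊢; omega

theorem ne_nil_mem_shuffles {α : Type*} {u v w : Word α} (hu : u ≠ []) (hw : w ∈ shuffles u v) :
    w ≠ [] := by
  have := length_mem_shuffles (u.length + v.length) u v w rfl hw
  intro h
  rw [h] at this
  cases u with
  | nil => exact hu rfl
  | cons a u => simp at this; omega

theorem sum_shuffles_concat {α : Type*} :
    ∀ (n : ℕ) (p q : Word α) (a b : α) (f : Word α → ℝ), p.length + q.length = n →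
    ((shuffles (p ++ [a]) (q ++ [b])).map f).sum =
      ((shuffles p (q ++ [b])).map (fun w => f (w ++ [a]))).sum +
      ((shuffles (p ++ [a]) q).map (fun w => f (w ++ [b]))).sum := by
  intro n
  induction n using Nat.strong_induction_on with
  | _ n ih =>
    intro p q a b f hn
    match p, q with
    | [], [] =>
      simp [shuffles_cons_cons, shuffles_nil_left, shuffles_nil_right]
      ring
    | [], c :: q' =>
      have IH := ih q'.length (by simp at hn; omega) [] q' a b (fun w => f (c :: w)) (by simp)
      simp only [List.nil_append, List.cons_append] at IH ⊢
      rw [shuffles_cons_cons, shuffles_nil_left, shuffles_cons_cons, shuffles_nil_left]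
      simp only [List.map_append, List.map_map, List.sum_append, List.map_cons, List.map_nil,
        List.sum_cons, List.sum_nil, Function.comp_def, List.cons_append, List.nil_append] at IH ⊢
      rw [IH]
      simp only [shuffles_nil_left, shuffles_nil_right, List.map_cons, List.map_nil,
        List.sum_cons, List.sum_nil, List.append_assoc, List.cons_append, List.nil_append]
      ring
    | e :: p', [] =>
      have IH := ih p'.length (by simp at hn; omega) p' [] a b (fun w => f (e :: w)) (by simp)
      simp only [List.nil_append, List.cons_append, shuffles_nil_right] at IH ⊢
      rw [shuffles_cons_cons, shuffles_cons_cons]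
      simp only [shuffles_nil_left, shuffles_nil_right, List.map_append, List.map_map,
        List.sum_append, List.map_cons, List.map_nil, List.sum_cons, List.sum_nil,
        Function.comp_def, List.cons_append, List.nil_append] at IH ⊢
      rw [IH]
      simp only [shuffles_nil_left, shuffles_nil_right, List.map_cons, List.map_nil,
        List.sum_cons, List.sum_nil, List.append_assoc, List.cons_append, List.nil_append]
      ring
    | e :: p', c :: q' =>
      have IH1 := ih (p'.length + (c :: q').length) (by simp at hn ⊢; omega) p' (c :: q') a b
        (fun w => f (e :: w)) rfl
      have IH2 := ih ((e :: p').length + q'.length) (by simp at hn ⊢; omega) (e :: p') q' a b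
        (fun w => f (c :: w)) rfl
      simp only [List.nil_append, List.cons_append] at IH1 IH2 ⊢
      rw [shuffles_cons_cons]
      simp only [List.map_append, List.map_map, List.sum_append, Function.comp_def]
      rw [IH1, IH2]
      rw [shuffles_cons_cons (a := e) (b := c), shuffles_cons_cons (a := e) (b := c)]
      simp only [List.map_append, List.map_map, List.sum_append, Function.comp_def,
        List.cons_append]
      ring


/-- signature of `Y` at word `w`, time `t` -/
noncomputable def SS {α : Type*} (Y : ℝ → α → ℝ) (w : Word α) (t : ℝ) : ℝ :=
  sigRev Y w.reverse t


theorem S_nil {α : Type*} (Y : ℝ → α → ℝ) (t : ℝ) : SS Y ([] : Word α) t = 1 := rfl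

theorem S_snoc {α : Type*} (Y : ℝ → α → ℝ) (w : Word α) (a : α) (t : ℝ) :
    SS Y (w ++ [a]) t = ∫ s in (0:ℝ)..t, SS Y w s * deriv (fun u => Y u a) s := by
  simp only [SS, List.reverse_append, List.reverse_cons, List.reverse_nil, List.nil_append,
    List.singleton_append]
  rfl

theorem S_zero {α : Type*} (Y : ℝ → α → ℝ) (w : Word α) (a : α) : SS Y (w ++ [a]) 0 = 0 := by
  rw [S_snoc, intervalIntegral.integral_same]

/-- pairing with the signature at time `t`, as a linear map -/
noncomputable def LL {α : Type*} (Y : ℝ → α → ℝ) (t : ℝ) : TA α →ₗ[ℝ] ℝ :=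
  Finsupp.linearCombination ℝ (fun w => SS Y w t)

theorem LL_single {α : Type*} (Y : ℝ → α → ℝ) (t : ℝ) (w : Word α) (c : ℝ) :
    LL Y t (Finsupp.single w c) = c * SS Y w t := by
  simp [LL, Finsupp.linearCombination_single]

theorem LL_apply {α : Type*} (Y : ℝ → α → ℝ) (t : ℝ) (z : TA α) :
    LL Y t z = ∑ w ∈ z.support, z w * SS Y w t := by
  rw [LL, Finsupp.linearCombination_apply]
  simp [Finsupp.sum]

theorem S_at_zero {α : Type*} (Y : ℝ → α → ℝ) (w : Word α) :
    SS Y w 0 = if w = [] then 1 else 0 := by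
  rcases List.eq_nil_or_concat w with rfl | ⟨q, b, rfl⟩
  · simp [S_nil]
  · simp [S_zero]

theorem LL_zero_time {α : Type*} (Y : ℝ → α → ℝ) (z : TA α) :
    LL Y 0 z = z [] := by
  rw [LL_apply]
  have h1 : ∀ w ∈ z.support, z w * SS Y w 0 = if w = [] then z w else 0 := by
    intro w _
    rw [S_at_zero]
    split <;> simp
  rw [Finset.sum_congr rfl h1, Finset.sum_ite_eq' z.support ([] : Word α) (fun w => z w)]
  split
  · rfl
  · exact (Finsupp.notMem_support_iff.1 (by assumption)).symm

theorem rshw_concat {α : Type*} (u q : Word α) (b : α) :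
    rshw u (q ++ [b]) = ((shuffles u q).map fun w => Finsupp.single (w ++ [b]) (1:ℝ)).sum := by
  rw [rshw, List.dropLast_concat]
  congr 1
  apply List.map_congr_left
  intro w _
  congr 1
  have h1 : (q ++ [b]).length - 1 = q.length := by simp
  rw [h1, List.drop_left]

theorem LL_rshw {α : Type*} (Y : ℝ → α → ℝ) (t : ℝ) (u q : Word α) (b : α) :
    LL Y t (rshw u (q ++ [b])) = ((shuffles u q).map fun w => SS Y (w ++ [b]) t).sum := by
  rw [rshw_concat, map_list_sum, List.map_map]
  congr 1
  apply List.map_congr_left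
  intro w _
  simp [Function.comp, LL_single]

structure PData {α : Type*} (Y : ℝ → α → ℝ) (T : ℝ) where
  n : ℕ
  τ : Fin (n + 1) → ℝ
  hT : 0 < T
  cont : ∀ i, ContinuousOn (fun t => Y t i) (Icc 0 T)
  mono : StrictMono τ
  h0 : τ 0 = 0
  hlast : τ (Fin.last n) = T
  c1 : ∀ (k : Fin n) (i : α), ContDiffOn ℝ 1 (fun t => Y t i) (Icc (τ k.castSucc) (τ k.succ))

namespace PData

variable {α : Type*} {Y : ℝ → α → ℝ} {T : ℝ} (P : PData Y T)

include P

theorem piece_lt (k : Fin P.n) : P.τ k.castSucc < P.τ k.succ :=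
  P.mono (Fin.castSucc_lt_succ (i := k))

theorem tau_nonneg (k : Fin (P.n + 1)) : 0 ≤ P.τ k := by
  rw [← P.h0]; exact P.mono.monotone (Fin.zero_le k)

theorem tau_le_T (k : Fin (P.n + 1)) : P.τ k ≤ T :=
  le_trans (P.mono.monotone (Fin.le_last k)) (le_of_eq P.hlast)

theorem piece_subset (k : Fin P.n) : Icc (P.τ k.castSucc) (P.τ k.succ) ⊆ Icc 0 T :=
  Icc_subset_Icc (P.tau_nonneg _) (P.tau_le_T _)

/-- the constancy engine -/
theorem zero_on {F : ℝ → ℝ} (hc : ContinuousOn F (Icc 0 T)) (h0 : F 0 = 0)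
    (hd : ∀ (k : Fin P.n), ∀ x ∈ Ico (P.τ k.castSucc) (P.τ k.succ),
      HasDerivWithinAt F 0 (Ici x) x) :
    ∀ t ∈ Icc 0 T, F t = 0 := by
  have key : ∀ m : ℕ, ∀ hm : m ≤ P.n, ∀ t ∈ Icc 0 (P.τ ⟨m, Nat.lt_succ_of_le hm⟩), F t = 0 := by
    intro m
    induction m with
    | zero =>
      intro hm t ht
      have h00 : P.τ ⟨0, Nat.lt_succ_of_le hm⟩ = 0 := P.h0
      rw [h00] at ht
      have : t = 0 := le_antisymm ht.2 ht.1
      rw [this, h0]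
    | succ m ih =>
      intro hm t ht
      have hm' : m < P.n := hm
      set k : Fin P.n := ⟨m, hm'⟩ with hk
      have hcs : k.castSucc = ⟨m, Nat.lt_succ_of_le hm'.le⟩ := rfl
      have hsc : k.succ = ⟨m + 1, Nat.lt_succ_of_le hm⟩ := rfl
      by_cases htm : t ≤ P.τ k.castSucc
      · exact ih hm'.le t ⟨ht.1, by rwa [hcs] at htm⟩
      · push_neg at htm
        have ht' : t ∈ Icc (P.τ k.castSucc) (P.τ k.succ) := ⟨htm.le, by rw [hsc]; exact ht.2⟩
        have := constant_of_has_deriv_right_zero (hc.mono (P.piece_subset k)) (hd k) t ht'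
        rw [this]
        exact ih hm'.le _ ⟨P.tau_nonneg _, by rw [hcs]⟩
  intro t ht
  have hlast' : P.τ ⟨P.n, Nat.lt_succ_of_le le_rfl⟩ = T := P.hlast
  exact key P.n le_rfl t (by rw [hlast']; exact ht)

/-- effective derivative on piece `k` -/
noncomputable def G (k : Fin P.n) (i : α) : ℝ → ℝ :=
  derivWithin (fun t => Y t i) (Icc (P.τ k.castSucc) (P.τ k.succ))

theorem G_cont (k : Fin P.n) (i : α) :
    ContinuousOn (P.G k i) (Icc (P.τ k.castSucc) (P.τ k.succ)) :=
  (P.c1 k i).continuousOn_derivWithin (uniqueDiffOn_Icc (P.piece_lt k)) le_rfl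

theorem deriv_eq_G (k : Fin P.n) (i : α) {x : ℝ}
    (hx : x ∈ Ioo (P.τ k.castSucc) (P.τ k.succ)) :
    deriv (fun t => Y t i) x = P.G k i x :=
  (derivWithin_of_mem_nhds (Icc_mem_nhds hx.1 hx.2)).symm

theorem Y_hasDeriv (k : Fin P.n) (i : α) {x : ℝ}
    (hx : x ∈ Ico (P.τ k.castSucc) (P.τ k.succ)) :
    HasDerivWithinAt (fun t => Y t i) (P.G k i x) (Ici x) x := by
  have hd : DifferentiableWithinAt ℝ (fun t => Y t i) (Icc (P.τ k.castSucc) (P.τ k.succ)) x :=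
    ((P.c1 k i).differentiableOn one_ne_zero) x ⟨hx.1, hx.2.le⟩
  exact hd.hasDerivWithinAt.mono_of_mem_nhdsWithin
    (Filter.mem_of_superset (Icc_mem_nhdsGE_of_mem ⟨le_rfl, hx.2⟩)
      (Icc_subset_Icc hx.1 le_rfl))

/-- Integrability of `f · deriv Y^i` over one piece. -/
theorem integrable_piece {f : ℝ → ℝ} (hf : ContinuousOn f (Icc 0 T)) (i : α) (k : Fin P.n) :
    IntervalIntegrable (fun s => f s * deriv (fun u => Y u i) s) volume
      (P.τ k.castSucc) (P.τ k.succ) := by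
  set a := P.τ k.castSucc
  set b := P.τ k.succ
  have hab : a ≤ b := (P.piece_lt k).le
  have hcont : ContinuousOn (fun s => f s * P.G k i s) (Icc a b) :=
    (hf.mono (P.piece_subset k)).mul (P.G_cont k i)
  have h1 : IntervalIntegrable (fun s => f s * P.G k i s) volume a b := by
    apply ContinuousOn.intervalIntegrable
    rwa [uIcc_of_le hab]
  refine h1.congr_ae ?_
  rw [uIoc_of_le hab, ← Measure.restrict_congr_set Ioo_ae_eq_Ioc]
  filter_upwards [ae_restrict_mem measurableSet_Ioo] with s hs
  rw [P.deriv_eq_G k i hs]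

theorem integrable {f : ℝ → ℝ} (hf : ContinuousOn f (Icc 0 T)) (i : α) {t : ℝ}
    (ht : t ∈ Icc 0 T) :
    IntervalIntegrable (fun s => f s * deriv (fun u => Y u i) s) volume 0 t := by
  have chain : ∀ m : ℕ, ∀ hm : m ≤ P.n,
      IntervalIntegrable (fun s => f s * deriv (fun u => Y u i) s) volume 0
        (P.τ ⟨m, Nat.lt_succ_of_le hm⟩) := by
    intro m
    induction m with
    | zero =>
      intro hm
      have h00 : P.τ ⟨0, Nat.lt_succ_of_le hm⟩ = 0 := P.h0
      rw [h00]
    | succ m ih =>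
      intro hm
      have hm' : m < P.n := hm
      exact (ih hm'.le).trans (P.integrable_piece hf i ⟨m, hm'⟩)
  have hT' : P.τ ⟨P.n, Nat.lt_succ_of_le le_rfl⟩ = T := P.hlast
  have := chain P.n le_rfl
  rw [hT'] at this
  refine this.mono_set ?_
  rw [uIcc_of_le ht.1, uIcc_of_le P.hT.le]
  exact Icc_subset_Icc le_rfl ht.2

theorem S_cont : ∀ w : Word α, ContinuousOn (fun t => SS Y w t) (Icc 0 T) := by
  intro w
  induction w using List.reverseRecOn with
  | nil => exact continuousOn_const
  | append_singleton w a ih =>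
    have hint : IntervalIntegrable (fun s => SS Y w s * deriv (fun u => Y u a) s) volume 0 T :=
      P.integrable ih a ⟨P.hT.le, le_rfl⟩
    have h2 := intervalIntegral.continuousOn_primitive_interval' hint
      (left_mem_uIcc (a := (0:ℝ)) (b := T))
    rw [uIcc_of_le P.hT.le] at h2
    exact h2.congr fun t _ => S_snoc Y w a t

theorem S_hasDeriv (w : Word α) (a : α) (k : Fin P.n) {x : ℝ}
    (hx : x ∈ Ico (P.τ k.castSucc) (P.τ k.succ)) :
    HasDerivWithinAt (fun t => SS Y (w ++ [a]) t) (SS Y w x * P.G k a x) (Ici x) x := by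
  set b := P.τ k.succ with hb
  have hxI : x ∈ Icc 0 T := P.piece_subset k ⟨hx.1, hx.2.le⟩
  have hIooIcc : Ioo x b ⊆ Icc 0 T :=
    fun s hs => P.piece_subset k ⟨le_trans hx.1 hs.1.le, hs.2.le⟩
  have hIooP : Ioo x b ⊆ Icc (P.τ k.castSucc) b := fun s hs => ⟨le_trans hx.1 hs.1.le, hs.2.le⟩
  have hIooOpen : Ioo x b ⊆ Ioo (P.τ k.castSucc) b := fun s hs => ⟨lt_of_le_of_lt hx.1 hs.1, hs.2⟩
  have hf : IntervalIntegrable (fun s => SS Y w s * deriv (fun u => Y u a) s) volume 0 x :=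
    P.integrable (P.S_cont w) a hxI
  have hIoomem : Ioo x b ∈ nhdsWithin x (Ioi x) := Ioo_mem_nhdsGT_of_mem ⟨le_rfl, hx.2⟩
  have hgc : ContinuousOn (fun s => SS Y w s * P.G k a s) (Ioo x b) :=
    ((P.S_cont w).mono hIooIcc).mul ((P.G_cont k a).mono hIooP)
  have hmeas : StronglyMeasurableAtFilter
      (fun s => SS Y w s * deriv (fun u => Y u a) s) (nhdsWithin x (Ioi x)) volume := by
    refine ⟨Ioo x b, hIoomem, ?_⟩
    refine (hgc.aestronglyMeasurable measurableSet_Ioo).congr ?_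
    filter_upwards [ae_restrict_mem measurableSet_Ioo] with s hs
    rw [P.deriv_eq_G k a (hIooOpen hs)]
  have heqf : 𝓝[Ioo x b] x = nhdsWithin x (Ioi x) := by
    have h := nhdsWithin_inter_of_mem hIoomem
    rwa [inter_eq_left.2 Ioo_subset_Ioi_self] at h
  have htends : Filter.Tendsto (fun s => SS Y w s * deriv (fun u => Y u a) s)
      (nhdsWithin x (Ioi x) ⊓ (MeasureTheory.ae volume)) (nhds (SS Y w x * P.G k a x)) := by
    refine Filter.Tendsto.mono_left ?_ inf_le_left
    rw [← heqf]
    have h1 : Filter.Tendsto (fun s => SS Y w s * P.G k a s) (𝓝[Ioo x b] x)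
        (nhds (SS Y w x * P.G k a x)) := by
      have hS : ContinuousWithinAt (fun t => SS Y w t) (Ioo x b) x :=
        ((P.S_cont w) x hxI).mono hIooIcc
      have hG : ContinuousWithinAt (P.G k a) (Ioo x b) x :=
        ((P.G_cont k a) x ⟨hx.1, hx.2.le⟩).mono hIooP
      exact hS.mul hG
    refine h1.congr' ?_
    filter_upwards [eventually_mem_nhdsWithin] with s hs
    rw [P.deriv_eq_G k a (hIooOpen hs)]
  have key : HasDerivWithinAt
      (fun u => ∫ s in (0:ℝ)..u, SS Y w s * deriv (fun u2 => Y u2 a) s)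
      (SS Y w x * P.G k a x) (Ici x) x :=
    intervalIntegral.integral_hasDerivWithinAt_of_tendsto_ae_right hf hmeas htends
  exact key.congr_of_eventuallyEq
    (Filter.Eventually.of_forall fun t => (S_snoc Y w a t)) (S_snoc Y w a x)


omit P in
theorem listSum_map_mul {ι : Type*} (l : List ι) (f : ι → ℝ) (c : ℝ) :
    (l.map fun i => f i * c).sum = (l.map f).sum * c := by
  induction l with
  | nil => simp
  | cons i l ih => simp [ih, add_mul]

omit P in
theorem continuousOn_listSum {ι : Type*} (l : List ι) (f : ι → ℝ → ℝ) {s : Set ℝ}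
    (h : ∀ i ∈ l, ContinuousOn (f i) s) :
    ContinuousOn (fun t => (l.map fun i => f i t).sum) s := by
  induction l with
  | nil => simpa using continuousOn_const
  | cons i l ih =>
    simp only [List.map_cons, List.sum_cons]
    exact (h i (by simp)).add (ih fun j hj => h j (by simp [hj]))

omit P in
theorem hasDerivWithinAt_listSum {ι : Type*} (l : List ι) (f : ι → ℝ → ℝ) (f' : ι → ℝ)
    {s : Set ℝ} {x : ℝ} (h : ∀ i ∈ l, HasDerivWithinAt (f i) (f' i) s x) :
    HasDerivWithinAt (fun t => (l.map fun i => f i t).sum) ((l.map f').sum) s x := by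
  induction l with
  | nil => simpa using hasDerivWithinAt_const x s (0 : ℝ)
  | cons i l ih =>
    simp only [List.map_cons, List.sum_cons]
    exact (h i (by simp)).add (ih fun j hj => h j (by simp [hj]))

theorem shuffle_identity_aux :
    ∀ (N : ℕ) (u v : Word α), u.length + v.length = N → ∀ t ∈ Icc 0 T,
      ((shuffles u v).map fun w => SS Y w t).sum = SS Y u t * SS Y v t := by
  intro N
  induction N using Nat.strong_induction_on with
  | _ N ih =>
    intro u v hN t ht
    rcases List.eq_nil_or_concat u with rfl | ⟨p, a, rfl⟩
    · simp [shuffles_nil_left, S_nil]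
    rcases List.eq_nil_or_concat v with rfl | ⟨q, b, rfl⟩
    · simp [shuffles_nil_right, S_nil]
    simp only [List.concat_eq_append] at hN ⊢
    have hsum : ∀ s : ℝ, ((shuffles (p ++ [a]) (q ++ [b])).map fun w => SS Y w s).sum =
        ((shuffles p (q ++ [b])).map fun w => SS Y (w ++ [a]) s).sum +
        ((shuffles (p ++ [a]) q).map fun w => SS Y (w ++ [b]) s).sum := fun s =>
      sum_shuffles_concat (p.length + q.length) p q a b _ rfl
    have hF : ∀ s ∈ Icc (0:ℝ) T,
        (((shuffles p (q ++ [b])).map fun w => SS Y (w ++ [a]) s).sum +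
         ((shuffles (p ++ [a]) q).map fun w => SS Y (w ++ [b]) s).sum) -
          SS Y (p ++ [a]) s * SS Y (q ++ [b]) s = 0 := by
      apply P.zero_on
      · apply ContinuousOn.sub
        · exact (continuousOn_listSum _ _ fun w _ => P.S_cont (w ++ [a])).add
            (continuousOn_listSum _ _ fun w _ => P.S_cont (w ++ [b]))
        · exact (P.S_cont _).mul (P.S_cont _)
      · simp [S_zero]
      · intro k x hx
        have hxI : x ∈ Icc 0 T := P.piece_subset k ⟨hx.1, hx.2.le⟩
        have IH1 : ((shuffles p (q ++ [b])).map fun w => SS Y w x).sum =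
            SS Y p x * SS Y (q ++ [b]) x := by
          refine ih (p.length + (q ++ [b]).length) ?_ p (q ++ [b]) rfl x hxI
          simp only [List.length_append, List.length_cons, List.length_nil] at hN ⊢
          omega
        have IH2 : ((shuffles (p ++ [a]) q).map fun w => SS Y w x).sum =
            SS Y (p ++ [a]) x * SS Y q x := by
          refine ih ((p ++ [a]).length + q.length) ?_ (p ++ [a]) q rfl x hxI
          simp only [List.length_append, List.length_cons, List.length_nil] at hN ⊢
          omega
        have h1 := hasDerivWithinAt_listSum (shuffles p (q ++ [b]))
          (fun w t => SS Y (w ++ [a]) t) (fun w => SS Y w x * P.G k a x)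
          (fun w _ => P.S_hasDeriv w a k hx)
        have h2 := hasDerivWithinAt_listSum (shuffles (p ++ [a]) q)
          (fun w t => SS Y (w ++ [b]) t) (fun w => SS Y w x * P.G k b x)
          (fun w _ => P.S_hasDeriv w b k hx)
        have h3 := (P.S_hasDeriv p a k hx).mul (P.S_hasDeriv q b k hx)
        convert (h1.add h2).sub h3 using 1
        · rfl
        · rfl
        · rfl
        rw [listSum_map_mul (shuffles p (q ++ [b])) (fun w => SS Y w x) (P.G k a x),
          listSum_map_mul (shuffles (p ++ [a]) q) (fun w => SS Y w x) (P.G k b x),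
          IH1, IH2]
        ring
    have := hF t ht
    rw [hsum t]
    linarith [this]

theorem shuffle_mul (u v : Word α) {t : ℝ} (ht : t ∈ Icc 0 T) :
    ((shuffles u v).map fun w => SS Y w t).sum = SS Y u t * SS Y v t :=
  P.shuffle_identity_aux (u.length + v.length) u v rfl t ht

theorem S_single (i : α) {t : ℝ} (ht : t ∈ Icc 0 T) :
    SS Y [i] t = Y t i - Y 0 i := by
  have hF : ∀ s ∈ Icc (0:ℝ) T, SS Y [i] s - (Y s i - Y 0 i) = 0 := by
    apply P.zero_on
    · exact (P.S_cont [i]).sub ((P.cont i).sub continuousOn_const)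
    · have h00 : SS Y ([] ++ [i]) 0 = 0 := S_zero Y [] i
      simp only [List.nil_append] at h00
      simp [h00]
    · intro k x hx
      have hS := P.S_hasDeriv [] i k hx
      simp only [List.nil_append] at hS
      have hY := (P.Y_hasDeriv k i hx).sub_const (Y 0 i)
      convert hS.sub hY using 1
      · rfl
      · rfl
      · rfl
      rw [S_nil]
      ring
  have := hF t ht
  linarith [this]



theorem LL_shw (u v : Word α) {t : ℝ} (ht : t ∈ Icc 0 T) :
    LL Y t (shw u v) = SS Y u t * SS Y v t := by
  rw [shw, map_list_sum, List.map_map, ← P.shuffle_mul u v ht]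
  congr 1
  apply List.map_congr_left
  intro w _
  simp [Function.comp, LL_single]

theorem LL_sh (x y : TA α) {t : ℝ} (ht : t ∈ Icc 0 T) :
    LL Y t (sh x y) = LL Y t x * LL Y t y := by
  rw [sh]
  simp only [Finsupp.sum]
  rw [map_sum, LL_apply, LL_apply, Finset.sum_mul_sum]
  refine Finset.sum_congr rfl fun u _ => ?_
  rw [map_sum]
  refine Finset.sum_congr rfl fun v _ => ?_
  rw [LinearMap.map_smul, P.LL_shw u v ht, smul_eq_mul]
  ring

/-- the right derivative of `t ↦ SS Y v t` for nonempty `v`, on piece `k` -/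
noncomputable def rD (k : Fin P.n) (v : Word α) (x : ℝ) : ℝ :=
  if h : v = [] then 0 else SS Y v.dropLast x * P.G k (v.getLast h) x

theorem S_hasDeriv' (v : Word α) (hv : v ≠ []) (k : Fin P.n) {x : ℝ}
    (hx : x ∈ Ico (P.τ k.castSucc) (P.τ k.succ)) :
    HasDerivWithinAt (fun t => SS Y v t) (P.rD k v x) (Ici x) x := by
  rcases List.eq_nil_or_concat v with rfl | ⟨q, b, rfl⟩
  · exact absurd rfl hv
  · have hder := P.S_hasDeriv q b k hx
    rw [rD, dif_neg hv]
    simp only [List.concat_eq_append, List.dropLast_concat, List.getLast_concat]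
    exact hder

theorem LL_rshw_cont (u v : Word α) (hv : v ≠ []) :
    ContinuousOn (fun t => LL Y t (rshw u v)) (Icc 0 T) := by
  rcases List.eq_nil_or_concat v with rfl | ⟨q, b, rfl⟩
  · exact absurd rfl hv
  · simp only [List.concat_eq_append]
    have heq : (fun t => LL Y t (rshw u (q ++ [b]))) =
        fun t => ((shuffles u q).map fun w => SS Y (w ++ [b]) t).sum :=
      funext fun t => LL_rshw Y t u q b
    rw [heq]
    exact continuousOn_listSum _ _ fun w _ => P.S_cont (w ++ [b])

omit P in
theorem LL_rshw_zero (u v : Word α) (hv : v ≠ []) : LL Y 0 (rshw u v) = 0 := by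
  rcases List.eq_nil_or_concat v with rfl | ⟨q, b, rfl⟩
  · exact absurd rfl hv
  · simp only [List.concat_eq_append]
    rw [LL_rshw]
    simp [S_zero]

theorem rshw_hasDeriv (u v : Word α) (hv : v ≠ []) (k : Fin P.n) {x : ℝ}
    (hx : x ∈ Ico (P.τ k.castSucc) (P.τ k.succ)) :
    HasDerivWithinAt (fun t => LL Y t (rshw u v)) (SS Y u x * P.rD k v x) (Ici x) x := by
  have hxI : x ∈ Icc 0 T := P.piece_subset k ⟨hx.1, hx.2.le⟩
  rcases List.eq_nil_or_concat v with rfl | ⟨q, b, rfl⟩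
  · exact absurd rfl hv
  · simp only [List.concat_eq_append] at hv ⊢
    have heq : (fun t => LL Y t (rshw u (q ++ [b]))) =
        fun t => ((shuffles u q).map fun w => SS Y (w ++ [b]) t).sum :=
      funext fun t => LL_rshw Y t u q b
    rw [heq]
    have hD := hasDerivWithinAt_listSum (shuffles u q) (fun w t => SS Y (w ++ [b]) t)
      (fun w => SS Y w x * P.G k b x) (fun w _ => P.S_hasDeriv w b k hx)
    convert hD using 1
    rw [listSum_map_mul (shuffles u q) (fun w => SS Y w x) (P.G k b x),
      P.shuffle_mul u q hxI, rD, dif_neg hv, List.dropLast_concat, List.getLast_concat]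
    ring

theorem deriv_zero_of_vanish {g : ℝ → ℝ} {D : ℝ} (k : Fin P.n) {x : ℝ}
    (hx : x ∈ Ico (P.τ k.castSucc) (P.τ k.succ)) (hg : ∀ t ∈ Icc (0:ℝ) T, g t = 0)
    (hD : HasDerivWithinAt g D (Ici x) x) : D = 0 := by
  have hxI : x ∈ Icc 0 T := P.piece_subset k ⟨hx.1, hx.2.le⟩
  have hmem : Icc x (P.τ k.succ) ∈ 𝓝[Ici x] x := Icc_mem_nhdsGE_of_mem ⟨le_rfl, hx.2⟩
  have hev : (fun _ => (0:ℝ)) =ᶠ[𝓝[Ici x] x] g := by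
    filter_upwards [hmem] with s hs
    exact (hg s ⟨le_trans hxI.1 hs.1, le_trans hs.2 (P.tau_le_T k.succ)⟩).symm
  have h2 : HasDerivWithinAt (fun _ => (0:ℝ)) D (Ici x) x :=
    hD.congr_of_eventuallyEq hev (by simp [hg x hxI])
  have h3 : HasDerivWithinAt (fun _ => (0:ℝ)) 0 (Ici x) x := hasDerivWithinAt_const x _ 0
  have hu : UniqueDiffWithinAt ℝ (Ici x) x := uniqueDiffOn_Ici x x Set.self_mem_Ici
  rw [← h2.derivWithin hu, h3.derivWithin hu]

omit P in
theorem LL_rsh_expand (x y : TA α) (t : ℝ) :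
    LL Y t (rsh x y) =
      ∑ u ∈ x.support, ∑ v ∈ y.support, (x u * y v) * LL Y t (rshw u v) := by
  rw [rsh]
  simp only [Finsupp.sum]
  rw [map_sum]
  refine Finset.sum_congr rfl fun u _ => ?_
  rw [map_sum]
  refine Finset.sum_congr rfl fun v _ => ?_
  rw [LinearMap.map_smul, smul_eq_mul]

theorem vanishA {z y : TA α} (hz : ∀ t ∈ Icc (0:ℝ) T, LL Y t z = 0) (hy : y [] = 0) :
    ∀ t ∈ Icc (0:ℝ) T, LL Y t (rsh z y) = 0 := by
  have hvne : ∀ v ∈ y.support, v ≠ [] := by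
    intro v hv h
    exact (Finsupp.mem_support_iff.1 hv) (h ▸ hy)
  have hF : ∀ t ∈ Icc (0:ℝ) T,
      (∑ u ∈ z.support, ∑ v ∈ y.support, (z u * y v) * LL Y t (rshw u v)) = 0 := by
    apply P.zero_on
    · apply continuousOn_finset_sum
      intro u _
      apply continuousOn_finset_sum
      intro v hv
      exact continuousOn_const.mul (P.LL_rshw_cont u v (hvne v hv))
    · refine Finset.sum_eq_zero fun u _ => Finset.sum_eq_zero fun v hv => ?_
      rw [LL_rshw_zero u v (hvne v hv), mul_zero]
    · intro k x hx
      have hxI : x ∈ Icc 0 T := P.piece_subset k ⟨hx.1, hx.2.le⟩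
      have hD : HasDerivWithinAt
          (fun t => ∑ u ∈ z.support, ∑ v ∈ y.support, (z u * y v) * LL Y t (rshw u v))
          (∑ u ∈ z.support, ∑ v ∈ y.support, (z u * y v) * (SS Y u x * P.rD k v x))
          (Ici x) x := by
        apply HasDerivWithinAt.fun_sum
        intro u _
        apply HasDerivWithinAt.fun_sum
        intro v hv
        exact (P.rshw_hasDeriv u v (hvne v hv) k hx).const_mul _
      have hval : (∑ u ∈ z.support, ∑ v ∈ y.support, (z u * y v) * (SS Y u x * P.rD k v x))
          = 0 := by
        have hfac : (∑ u ∈ z.support, ∑ v ∈ y.support, (z u * y v) * (SS Y u x * P.rD k v x))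
            = (∑ u ∈ z.support, z u * SS Y u x) * (∑ v ∈ y.support, y v * P.rD k v x) := by
          rw [Finset.sum_mul_sum]
          exact Finset.sum_congr rfl fun u _ => Finset.sum_congr rfl fun v _ => by ring
        rw [hfac, ← LL_apply, hz x hxI, zero_mul]
      exact hval ▸ hD
  intro t ht
  rw [LL_rsh_expand]
  exact hF t ht

theorem vanishB {z y : TA α} (hz : ∀ t ∈ Icc (0:ℝ) T, LL Y t z = 0) (hz0 : z [] = 0) :
    ∀ t ∈ Icc (0:ℝ) T, LL Y t (rsh y z) = 0 := by
  have hune : ∀ u ∈ z.support, u ≠ [] := by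
    intro u hu h
    exact (Finsupp.mem_support_iff.1 hu) (h ▸ hz0)
  have hF : ∀ t ∈ Icc (0:ℝ) T,
      (∑ v ∈ y.support, ∑ u ∈ z.support, (y v * z u) * LL Y t (rshw v u)) = 0 := by
    apply P.zero_on
    · apply continuousOn_finset_sum
      intro v _
      apply continuousOn_finset_sum
      intro u hu
      exact continuousOn_const.mul (P.LL_rshw_cont v u (hune u hu))
    · refine Finset.sum_eq_zero fun v _ => Finset.sum_eq_zero fun u hu => ?_
      rw [LL_rshw_zero v u (hune u hu), mul_zero]
    · intro k x hx
      have hxI : x ∈ Icc 0 T := P.piece_subset k ⟨hx.1, hx.2.le⟩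
      have hD : HasDerivWithinAt
          (fun t => ∑ v ∈ y.support, ∑ u ∈ z.support, (y v * z u) * LL Y t (rshw v u))
          (∑ v ∈ y.support, ∑ u ∈ z.support, (y v * z u) * (SS Y v x * P.rD k u x))
          (Ici x) x := by
        apply HasDerivWithinAt.fun_sum
        intro v _
        apply HasDerivWithinAt.fun_sum
        intro u hu
        exact (P.rshw_hasDeriv v u (hune u hu) k hx).const_mul _
      have hzder : HasDerivWithinAt (fun t => LL Y t z)
          (∑ u ∈ z.support, z u * P.rD k u x) (Ici x) x := by
        have heq : (fun t => LL Y t z) = fun t => ∑ u ∈ z.support, z u * SS Y u t :=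
          funext fun t => LL_apply Y t z
        rw [heq]
        apply HasDerivWithinAt.fun_sum
        intro u hu
        exact (P.S_hasDeriv' u (hune u hu) k hx).const_mul _
      have hz2 : (∑ u ∈ z.support, z u * P.rD k u x) = 0 :=
        P.deriv_zero_of_vanish k hx hz hzder
      have hval : (∑ v ∈ y.support, ∑ u ∈ z.support, (y v * z u) * (SS Y v x * P.rD k u x))
          = 0 := by
        have hfac : (∑ v ∈ y.support, ∑ u ∈ z.support, (y v * z u) * (SS Y v x * P.rD k u x))
            = (∑ v ∈ y.support, y v * SS Y v x) * (∑ u ∈ z.support, z u * P.rD k u x) := by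
          rw [Finset.sum_mul_sum]
          exact Finset.sum_congr rfl fun v _ => Finset.sum_congr rfl fun u _ => by ring
        rw [hfac, hz2, mul_zero]
      exact hval ▸ hD
  intro t ht
  rw [LL_rsh_expand]
  exact hF t ht


end PData


end Aux

/-- If `p : ℝ^d → ℝ^m` is a polynomial map with `p(0) = 0` and `X` is a
path starting at `0` staying in the zero locus of `p`, then `⟨σ(X), x⟩ = 0` for every
`x` in the `≻`-ideal generated by `φ(p₁),…,φ(pₘ)` (the smallest subspace of
`T^{≥1}(ℝ^d)` containing the `φ(pⱼ)` and stable under `≻` on both sides). -/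
theorem statement9 {d m : ℕ} (p : Fin m → MvPolynomial (Fin d) ℝ)
    (hp0 : ∀ j, MvPolynomial.eval (fun _ => (0 : ℝ)) (p j) = 0)
    (Φ : MvPolynomial (Fin d) ℝ → TA (Fin d))
    (hΦadd : ∀ q r, Φ (q + r) = Φ q + Φ r)
    (hΦmul : ∀ q r, Φ (q * r) = sh (Φ q) (Φ r))
    (hΦC : ∀ c : ℝ, Φ (MvPolynomial.C c) = Finsupp.single [] c)
    (hΦX : ∀ j : Fin d, Φ (MvPolynomial.X j) = Finsupp.single [j] 1)
    (X : RawPath (Fin d)) (hX : IsPath X)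
    (hX0 : ∀ i, X.toFun 0 i = 0)
    (hXzero : ∀ t ∈ Set.Icc (0 : ℝ) X.T, ∀ j,
      MvPolynomial.eval (fun i => X.toFun t i) (p j) = 0) :
    ∀ x ∈ sInf {J : Submodule ℝ (TA (Fin d)) |
        (∀ z ∈ J, z [] = 0) ∧ (∀ j, Φ (p j) ∈ J) ∧
        ∀ z ∈ J, ∀ y : TA (Fin d), y [] = 0 → rsh z y ∈ J ∧ rsh y z ∈ J},
      pair X x = 0 := by
  classical
  obtain ⟨hT, hcont, n, τ, hmono, hτ0, hτlast, hC1⟩ := hX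
  set Y := X.toFun with hYdef
  let P : PData Y X.T := ⟨n, τ, hT, hcont, hmono, hτ0, hτlast, hC1⟩
  have hIccT : X.T ∈ Set.Icc (0:ℝ) X.T := ⟨hT.le, le_rfl⟩
  have hIcc0 : (0:ℝ) ∈ Set.Icc (0:ℝ) X.T := ⟨le_rfl, hT.le⟩
  have Φeval : ∀ (q : MvPolynomial (Fin d) ℝ), ∀ t ∈ Set.Icc (0:ℝ) X.T,
      LL Y t (Φ q) = MvPolynomial.eval (fun i => Y t i) q := by
    intro q
    induction q using MvPolynomial.induction_on with
    | C c =>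
      intro t ht
      rw [hΦC, LL_single, S_nil, mul_one, MvPolynomial.eval_C]
    | add q r hq hr =>
      intro t ht
      rw [hΦadd, map_add, hq t ht, hr t ht, map_add]
    | mul_X q i hq =>
      intro t ht
      rw [hΦmul, P.LL_sh _ _ ht, hq t ht, hΦX, LL_single, one_mul, P.S_single i ht,
        hX0 i, sub_zero, map_mul, MvPolynomial.eval_X]
  let J : Submodule ℝ (TA (Fin d)) :=
    { carrier := {z | z [] = 0 ∧ ∀ t ∈ Set.Icc (0:ℝ) X.T, LL Y t z = 0}
      add_mem' := by
        rintro a b ⟨ha0, ha⟩ ⟨hb0, hb⟩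
        refine ⟨by simp [Finsupp.add_apply, ha0, hb0], fun t ht => by
          rw [map_add, ha t ht, hb t ht, add_zero]⟩
      zero_mem' := by
        refine ⟨by simp, fun t ht => map_zero _⟩
      smul_mem' := by
        rintro c a ⟨ha0, ha⟩
        refine ⟨by simp [Finsupp.smul_apply, ha0], fun t ht => by
          rw [map_smul, ha t ht, smul_zero]⟩ }
  have hJmem : J ∈ {J' : Submodule ℝ (TA (Fin d)) |
      (∀ z ∈ J', z [] = 0) ∧ (∀ j, Φ (p j) ∈ J') ∧
      ∀ z ∈ J', ∀ y : TA (Fin d), y [] = 0 → rsh z y ∈ J' ∧ rsh y z ∈ J'} := by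
    refine ⟨fun z hz => hz.1, fun j => ?_, fun z hz y hy => ?_⟩
    · have hvan : ∀ t ∈ Set.Icc (0:ℝ) X.T, LL Y t (Φ (p j)) = 0 := by
        intro t ht
        rw [Φeval (p j) t ht]
        exact hXzero t ht j
      exact ⟨by rw [← LL_zero_time Y]; exact hvan 0 hIcc0, hvan⟩
    · obtain ⟨hz0, hzv⟩ := hz
      have hA := P.vanishA hzv hy
      have hB := P.vanishB (y := y) hzv hz0
      exact ⟨⟨by rw [← LL_zero_time Y]; exact hA 0 hIcc0, hA⟩,
             ⟨by rw [← LL_zero_time Y]; exact hB 0 hIcc0, hB⟩⟩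
  intro x hx
  have hxJ : x ∈ J := (sInf_le hJmem) hx
  have hpair : pair X x = LL Y X.T x := rfl
  rw [hpair]
  exact hxJ.2 X.T hIccT

end PathVarieties
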